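/- Let q ≥ 4 be an integer, β ≥ 0 and h < 0. Let x and x' be global minimizers of Φ_{β,h}^{(q)} on Δ_q, each ordered so that x₁ < x₂ = ... = x_{q−1} ≤ x_q and x'₁ < x'₂ = ... = x'_{q−1} ≤ x'_q (every global minimizer admits such an ordering). Each satisfies the stationarity relations x₁ e^{−β x₁ − h} = x_k e^{−β x_k} for all k = 2,...,q; let Θ = x₁ e^{−β x₁ − h} and Θ' = x'₁ e^{−β x'₁ − h} denote the common values. If Θ = Θ', then x = x'. -/

import Mathlib

open Real Set

noncomputable section

/-- The probability simplex `Δ_q`. -/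
def pottsSimplex (q : ℕ) : Set (Fin q → ℝ) :=
  {x | (∀ k, 0 ≤ x k) ∧ ∑ k, x k = 1}

/-- The mean-field free-energy function `Φ_{β,h}^{(q)}` of the `q`-state Potts model. -/
noncomputable def pottsPhi (q : ℕ) [NeZero q] (β h : ℝ) (x : Fin q → ℝ) : ℝ :=
  (∑ k, (-(β / 2) * x k ^ 2 + x k * Real.log (x k))) - h * x 0

/-- `x` is a global minimizer of `Φ_{β,h}^{(q)}` on `Δ_q`. -/
def IsPottsMinimizer (q : ℕ) [NeZero q] (β h : ℝ) (x : Fin q → ℝ) : Prop :=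
  x ∈ pottsSimplex q ∧ ∀ y ∈ pottsSimplex q, pottsPhi q β h x ≤ pottsPhi q β h y

/-- The last coordinate index of `Fin q` (corresponding to `x_q`). -/
def lastIdx (q : ℕ) [NeZero q] : Fin q :=
  ⟨q - 1, Nat.sub_lt (Nat.pos_of_ne_zero (NeZero.ne q)) Nat.one_pos⟩

/-- `k` is one of the "middle" indices `2,…,q-1` (i.e. `1,…,q-2` in 0-based indexing). -/
def IsMid (q : ℕ) [NeZero q] (k : Fin q) : Prop := k ≠ 0 ∧ k ≠ lastIdx q

/-- The ordered form `x₁ < x₂ = … = x_{q-1} ≤ x_q`. -/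
def NegOrderedForm (q : ℕ) [NeZero q] (x : Fin q → ℝ) : Prop :=
  (∀ j k : Fin q, IsMid q j → IsMid q k → x j = x k) ∧
  (∀ j : Fin q, IsMid q j → x 0 < x j) ∧
  (∀ j : Fin q, IsMid q j → x j ≤ x (lastIdx q))

namespace PottsAux

/-- single-site free energy -/
noncomputable def Fent (β u : ℝ) : ℝ := -(β / 2) * u ^ 2 + u * Real.log u

lemma continuous_Fent (β : ℝ) : Continuous (Fent β) := by
  unfold Fent
  exact (continuous_const.mul (continuous_pow 2)).add Real.continuous_mul_log

lemma hasDerivAt_Fent {β u : ℝ} (hu : u ≠ 0) :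
    HasDerivAt (Fent β) (-(β * u) + (Real.log u + 1)) u := by
  have h1 : HasDerivAt (fun v : ℝ => -(β / 2) * v ^ 2) (-(β / 2) * (2 * u ^ 1)) u := by
    simpa using (hasDerivAt_pow 2 u).const_mul (-(β / 2))
  have h2 := Real.hasDerivAt_mul_log hu
  have h3 := h1.add h2
  exact h3.congr_deriv (by ring)

lemma hasDerivAt_mul_log_const_add (b r : ℝ) (h : b + r ≠ 0) :
    HasDerivAt (fun s : ℝ => (b + s) * Real.log (b + s)) (Real.log (b + r) + 1) r := by
  have := HasDerivAt.comp_const_add (f := fun u : ℝ => u * Real.log u) b r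
    (Real.hasDerivAt_mul_log h)
  simpa using this

lemma hasDerivAt_mul_log_const_sub (b r : ℝ) (h : b - r ≠ 0) :
    HasDerivAt (fun s : ℝ => (b - s) * Real.log (b - s)) (-(Real.log (b - r) + 1)) r := by
  have := HasDerivAt.comp_const_sub (f := fun u : ℝ => u * Real.log u) b r
    (Real.hasDerivAt_mul_log h)
  simpa using this

lemma Fent_zero (β : ℝ) : Fent β 0 = 0 := by simp [Fent]

/-- perturbation of `x` moving mass `t` from coordinate `k` to coordinate `j` -/
def pert {q : ℕ} (x : Fin q → ℝ) (j k : Fin q) (t : ℝ) : Fin q → ℝ :=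
  Function.update (Function.update x j (x j + t)) k (x k - t)

variable {q : ℕ} {x : Fin q → ℝ} {j k : Fin q} {t : ℝ}

lemma pert_apply_j (hjk : j ≠ k) : pert x j k t j = x j + t := by
  simp [pert, Function.update_of_ne hjk]

lemma pert_apply_k : pert x j k t k = x k - t := by simp [pert]

lemma pert_apply_other {i : Fin q} (hij : i ≠ j) (hik : i ≠ k) : pert x j k t i = x i := by
  simp [pert, Function.update_of_ne hik, Function.update_of_ne hij]

lemma sum_comp_pert (g : ℝ → ℝ) (hjk : j ≠ k) :
    ∑ i, g (pert x j k t i)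
      = (∑ i, g (x i)) - g (x j) - g (x k) + g (x j + t) + g (x k - t) := by
  classical
  have hcomp : (fun i => g (pert x j k t i))
      = Function.update (Function.update (fun i => g (x i)) j (g (x j + t))) k (g (x k - t)) := by
    funext i
    rcases eq_or_ne i k with rfl | hik
    · simp [pert]
    · rcases eq_or_ne i j with rfl | hij
      · simp [pert, Function.update_of_ne hjk, Function.update_of_ne hik]
      · simp [pert, Function.update_of_ne hik, Function.update_of_ne hij]
  rw [hcomp]
  rw [Finset.sum_update_of_mem (Finset.mem_univ k)]
  have hjmem : j ∈ Finset.univ \ {k} := by simp [hjk]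
  rw [Finset.sum_update_of_mem hjmem]
  have h1 : ∑ i, g (x i) = g (x k) + ∑ i ∈ Finset.univ \ {k}, g (x i) := by
    rw [← Finset.sum_update_of_mem (Finset.mem_univ k)]
    congr 1
    funext i
    rcases eq_or_ne i k with rfl | hik
    · simp
    · simp [Function.update_of_ne hik]
  have h2 : ∑ i ∈ Finset.univ \ {k}, g (x i)
      = g (x j) + ∑ i ∈ (Finset.univ \ {k}) \ {j}, g (x i) := by
    rw [← Finset.sum_update_of_mem hjmem]
    congr 1
    funext i
    rcases eq_or_ne i j with rfl | hij
    · simp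
    · simp [Function.update_of_ne hij]
  rw [h1, h2]
  ring

lemma sum_pert (hjk : j ≠ k) : ∑ i, pert x j k t i = ∑ i, x i := by
  have := sum_comp_pert (x := x) (t := t) (fun u => u) hjk
  rw [this]; ring

lemma pert_mem_simplex (hx : x ∈ pottsSimplex q) (hjk : j ≠ k)
    (h1 : 0 ≤ x j + t) (h2 : 0 ≤ x k - t) : pert x j k t ∈ pottsSimplex q := by
  refine ⟨fun i => ?_, by rw [sum_pert hjk]; exact hx.2⟩
  rcases eq_or_ne i k with rfl | hik
  · rw [pert_apply_k]; exact h2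
  rcases eq_or_ne i j with rfl | hij
  · rw [pert_apply_j hjk]; exact h1
  · rw [pert_apply_other hij hik]; exact hx.1 i

lemma phi_pert [NeZero q] (β h : ℝ) (hjk : j ≠ k) :
    pottsPhi q β h (pert x j k t)
      = pottsPhi q β h x - Fent β (x j) - Fent β (x k)
        + Fent β (x j + t) + Fent β (x k - t) - h * (pert x j k t 0 - x 0) := by
  unfold pottsPhi
  have := sum_comp_pert (x := x) (t := t) (Fent β) hjk
  simp only [Fent] at this
  rw [this]
  simp only [Fent]
  ring

/-- Stationarity between coordinate 0 and a positive coordinate `k`. -/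
lemma stationarity [NeZero q] {β h : ℝ} {x : Fin q → ℝ}
    (hmin : IsPottsMinimizer q β h x) {k : Fin q} (hk : k ≠ 0)
    (h0 : 0 < x 0) (hkpos : 0 < x k) :
    x 0 * Real.exp (-β * x 0 - h) = x k * Real.exp (-β * x k) := by
  have hne : (0 : Fin q) ≠ k := Ne.symm hk
  set φ : ℝ → ℝ := fun t => Fent β (x 0 + t) + Fent β (x k - t) - h * t with hφ
  have hlocal : IsLocalMin φ 0 := by
    have hmem : Ioo (-(x 0)) (x k) ∈ nhds (0 : ℝ) := Ioo_mem_nhds (by linarith) hkpos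
    refine Filter.eventually_of_mem hmem (fun t ht => ?_)
    have h1 : 0 ≤ x 0 + t := by have := ht.1; linarith
    have h2 : 0 ≤ x k - t := by have := ht.2; linarith
    have hy := pert_mem_simplex hmin.1 hne h1 h2
    have hle := hmin.2 _ hy
    rw [phi_pert β h hne] at hle
    rw [pert_apply_j hne] at hle
    have hsimp : x 0 + t - x 0 = t := by ring
    rw [hsimp] at hle
    simp only [φ]
    simp only [add_zero, sub_zero, mul_zero]
    linarith
  have hd1 : HasDerivAt (fun t : ℝ => Fent β (x 0 + t))
      (-(β * x 0) + (Real.log (x 0) + 1)) 0 := by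
    refine HasDerivAt.comp_const_add (x 0) 0 ?_
    rw [add_zero]
    exact hasDerivAt_Fent h0.ne'
  have hd2 : HasDerivAt (fun t : ℝ => Fent β (x k - t))
      (-(-(β * x k) + (Real.log (x k) + 1))) 0 := by
    refine HasDerivAt.comp_const_sub (x k) 0 ?_
    rw [sub_zero]
    exact hasDerivAt_Fent hkpos.ne'
  have hd3 : HasDerivAt (fun t : ℝ => h * t) h 0 := by
    simpa using (hasDerivAt_id (0 : ℝ)).const_mul h
  have hdφ : HasDerivAt φ
      ((-(β * x 0) + (Real.log (x 0) + 1)) + -(-(β * x k) + (Real.log (x k) + 1)) - h) 0 :=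
    (hd1.add hd2).sub hd3
  have hzero := hlocal.deriv_eq_zero
  rw [hdφ.deriv] at hzero
  have hlog : Real.log (x 0) + (-β * x 0 - h) = Real.log (x k) + (-β * x k) := by linarith
  have := congrArg Real.exp hlog
  rwa [Real.exp_add, Real.exp_add, Real.exp_log h0, Real.exp_log hkpos] at this


lemma lastIdx_ne_zero [NeZero q] (hq : 4 ≤ q) : lastIdx q ≠ 0 := by
  intro he
  have := congrArg Fin.val he
  simp [lastIdx] at this
  omega

/-- coordinate 0 of a minimizer in ordered form is positive -/
lemma x0_pos [NeZero q] (hq : 4 ≤ q) {β h : ℝ} (hβ : 0 ≤ β) (hh : h < 0) {x : Fin q → ℝ}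
    (hmin : IsPottsMinimizer q β h x) (hmid : ∃ j, IsMid q j ∧ x 0 < x j ∧ x j ≤ x (lastIdx q)) :
    0 < x 0 := by
  rcases (hmin.1.1 0).lt_or_eq with hlt | heq
  · exact hlt
  exfalso
  obtain ⟨j₁, hj₁, hj₁lt, hj₁le⟩ := hmid
  set c := x (lastIdx q) with hc
  have hcpos : 0 < c := lt_of_le_of_lt (le_of_eq heq) (lt_of_lt_of_le hj₁lt hj₁le)
  set M := β * c - Real.log (c / 2) with hM
  set t := min (c / 2) (Real.exp (h - M - 1)) with ht
  have ht0 : 0 < t := lt_min (by positivity) (Real.exp_pos _)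
  have htc : t ≤ c / 2 := min_le_left _ _
  have hlogt : Real.log t ≤ h - M - 1 := by
    calc Real.log t ≤ Real.log (Real.exp (h - M - 1)) :=
          Real.log_le_log ht0 (min_le_right _ _)
      _ = h - M - 1 := Real.log_exp _
  -- monotone comparison on [c/2, c]
  have hmono : MonotoneOn (fun u => Fent β u + M * u) (Icc (c / 2) c) := by
    apply monotoneOn_of_deriv_nonneg (convex_Icc _ _)
    · exact ((continuous_Fent β).add (continuous_const.mul continuous_id)).continuousOn
    · intro u hu
      rw [interior_Icc] at hu
      have hu0 : u ≠ 0 := ne_of_gt (lt_trans (by positivity) hu.1)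
      exact ((hasDerivAt_Fent hu0).add
        (by simpa using (hasDerivAt_id u).const_mul M)).differentiableAt.differentiableWithinAt
    · intro u hu
      rw [interior_Icc] at hu
      have hu0 : (0 : ℝ) < u := lt_trans (by positivity) hu.1
      have hder : HasDerivAt (fun u => Fent β u + M * u)
          ((-(β * u) + (Real.log u + 1)) + M) u := by
        have := (hasDerivAt_Fent (β := β) hu0.ne').add
          (by simpa using (hasDerivAt_id u).const_mul M : HasDerivAt (fun v : ℝ => M * v) M u)
        exact this
      rw [hder.deriv]
      have h1 : Real.log (c / 2) ≤ Real.log u := Real.log_le_log (by positivity) hu.1.le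
      have h2 : β * u ≤ β * c := mul_le_mul_of_nonneg_left hu.2.le hβ
      simp only [hM]
      linarith
  have hkey : Fent β (c - t) - Fent β c ≤ M * t := by
    have hmem1 : c - t ∈ Icc (c / 2) c := ⟨by linarith, by linarith⟩
    have hmem2 : c ∈ Icc (c / 2) c := ⟨by linarith, le_refl _⟩
    have := hmono hmem1 hmem2 (by linarith)
    simp only at this
    linarith
  -- the perturbation
  have hne : (0 : Fin q) ≠ lastIdx q := Ne.symm (lastIdx_ne_zero hq)
  have h1 : 0 ≤ x 0 + t := by rw [← heq]; linarith
  have h2 : 0 ≤ x (lastIdx q) - t := by rw [← hc]; linarith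
  have hy := pert_mem_simplex hmin.1 hne h1 h2
  have hle := hmin.2 _ hy
  rw [phi_pert β h hne, pert_apply_j hne] at hle
  rw [← heq, ← hc] at hle
  have hle2 : 0 ≤ - Fent β 0 - Fent β c + Fent β (0 + t) + Fent β (c - t) - h * (0 + t - 0) := by
    linarith
  rw [Fent_zero, zero_add] at hle2
  have hFt : Fent β t ≤ t * Real.log t := by
    simp only [Fent]
    nlinarith [sq_nonneg t]
  have htlogt : t * Real.log t ≤ t * (h - M - 1) := mul_le_mul_of_nonneg_left hlogt ht0.le
  nlinarith

/-- Second-order condition: a middle coordinate `j` (sharing its value with another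
coordinate `k ≠ 0`) of a minimizer satisfies `β * x j ≤ 1`. -/
lemma mid_small [NeZero q] {β h : ℝ} (hβ : 0 ≤ β) {x : Fin q → ℝ}
    (hmin : IsPottsMinimizer q β h x) {j k : Fin q} (hjk : j ≠ k)
    (hj0 : j ≠ 0) (hk0 : k ≠ 0) (heqv : x j = x k) (hbpos : 0 < x j) :
    β * x j ≤ 1 := by
  by_contra hb1
  push_neg at hb1
  set b := x j with hb
  have hβpos : 0 < β := by nlinarith
  have hbβ : 1 / β < b := by rw [div_lt_iff₀ hβpos]; linarith
  set t := (b - 1 / β) / 2 with htdef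
  have ht0 : 0 < t := by simp only [htdef]; linarith
  have hbt : b - t = (b + 1 / β) / 2 := by simp only [htdef]; ring
  have hβinv : 0 < 1 / β := by positivity
  have hbtgt : 1 / β < b - t := by rw [hbt]; linarith
  have hbtpos : 0 < b - t := lt_trans hβinv hbtgt
  have htb : t < b := by linarith
  -- perturbation inequality
  have h1 : 0 ≤ x j + t := by linarith
  have h2 : 0 ≤ x k - t := by rw [← heqv]; linarith
  have hy := pert_mem_simplex hmin.1 hjk h1 h2
  have hle := hmin.2 _ hy
  rw [phi_pert β h hjk] at hle
  rw [pert_apply_other (Ne.symm hj0) (Ne.symm hk0), ← heqv] at hle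
  have hle2 : 0 ≤ - Fent β b - Fent β b + Fent β (b + t) + Fent β (b - t) := by
    have hz : h * (x 0 - x 0) = 0 := by ring
    rw [hz] at hle
    linarith
  -- entropy bound : H(t) ≤ t^2/(b-t)
  have hmono : MonotoneOn
      (fun r => r ^ 2 / (b - t) - ((b + r) * Real.log (b + r) + (b - r) * Real.log (b - r)))
      (Icc 0 t) := by
    apply monotoneOn_of_deriv_nonneg (convex_Icc _ _)
    · apply ContinuousOn.sub
      · exact ((continuous_pow 2).div_const _).continuousOn
      · apply ContinuousOn.add
        · exact (Real.continuous_mul_log.comp (continuous_const.add continuous_id)).continuousOn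
        · exact (Real.continuous_mul_log.comp (continuous_const.sub continuous_id)).continuousOn
    · intro r hr
      rw [interior_Icc] at hr
      have hbr1 : 0 < b + r := by linarith [hr.1]
      have hbr2 : 0 < b - r := by linarith [hr.2]
      have hd : HasDerivAt
          (fun r => r ^ 2 / (b - t) - ((b + r) * Real.log (b + r) + (b - r) * Real.log (b - r)))
          ((2 * r ^ 1) / (b - t) - ((Real.log (b + r) + 1) + -(Real.log (b - r) + 1))) r := by
        refine HasDerivAt.sub ?_ (HasDerivAt.add ?_ ?_)
        · exact (hasDerivAt_pow 2 r).div_const _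
        · exact hasDerivAt_mul_log_const_add b r hbr1.ne'
        · exact hasDerivAt_mul_log_const_sub b r hbr2.ne'
      exact hd.differentiableAt.differentiableWithinAt
    · intro r hr
      rw [interior_Icc] at hr
      have hbr1 : 0 < b + r := by linarith [hr.1]
      have hbr2 : 0 < b - r := by linarith [hr.2]
      have hd : HasDerivAt
          (fun r => r ^ 2 / (b - t) - ((b + r) * Real.log (b + r) + (b - r) * Real.log (b - r)))
          ((2 * r ^ 1) / (b - t) - ((Real.log (b + r) + 1) + -(Real.log (b - r) + 1))) r := by
        refine HasDerivAt.sub ?_ (HasDerivAt.add ?_ ?_)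
        · exact (hasDerivAt_pow 2 r).div_const _
        · exact hasDerivAt_mul_log_const_add b r hbr1.ne'
        · exact hasDerivAt_mul_log_const_sub b r hbr2.ne'
      rw [hd.deriv]
      -- need: log(b+r) - log(b-r) ≤ 2r/(b-t)
      have hdivpos : 0 < (b + r) / (b - r) := div_pos hbr1 hbr2
      have hlog1 : Real.log (b + r) - Real.log (b - r) ≤ (b + r) / (b - r) - 1 := by
        rw [← Real.log_div hbr1.ne' hbr2.ne']
        exact Real.log_le_sub_one_of_pos hdivpos
      have hfrac : (b + r) / (b - r) - 1 = 2 * r / (b - r) := by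
        field_simp
        ring
      have hle3 : 2 * r / (b - r) ≤ 2 * r / (b - t) := by
        apply div_le_div_of_nonneg_left (by linarith [hr.1]) hbtpos (by linarith [hr.2])
      have : Real.log (b + r) - Real.log (b - r) ≤ 2 * r / (b - t) := by
        rw [hfrac] at hlog1; linarith
      have hpow : (2 * r ^ 1 : ℝ) = 2 * r := by ring
      rw [hpow]
      linarith
  have hH : (b + t) * Real.log (b + t) + (b - t) * Real.log (b - t) - 2 * (b * Real.log b)
      ≤ t ^ 2 / (b - t) := by
    have hmem0 : (0 : ℝ) ∈ Icc (0 : ℝ) t := ⟨le_refl _, ht0.le⟩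
    have hmemt : t ∈ Icc (0 : ℝ) t := ⟨ht0.le, le_refl _⟩
    have := hmono hmem0 hmemt ht0.le
    simp only [add_zero, sub_zero, ne_eq, OfNat.ofNat_ne_zero, not_false_eq_true,
      zero_pow, zero_div] at this
    linarith
  -- final contradiction
  have hexp : - Fent β b - Fent β b + Fent β (b + t) + Fent β (b - t)
      = ((b + t) * Real.log (b + t) + (b - t) * Real.log (b - t) - 2 * (b * Real.log b))
        - β * t ^ 2 := by
    simp only [Fent]
    ring
  rw [hexp] at hle2
  have hlt : t ^ 2 / (b - t) < β * t ^ 2 := by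
    rw [div_lt_iff₀ hbtpos]
    have h1 : 1 < β * (b - t) := by
      have h2 := mul_lt_mul_of_pos_left hbtgt hβpos
      rwa [mul_one_div, div_self hβpos.ne'] at h2
    nlinarith [sq_nonneg t, pow_pos ht0 2]
  linarith

/-- `u ↦ u e^{-β u}` is injective on the region `β u ≤ 1`, `u ≥ 0`. -/
lemma f_inj {β : ℝ} (hβ : 0 ≤ β) {u v : ℝ} (hu : 0 ≤ u) (hv : 0 ≤ v)
    (hub : β * u ≤ 1) (hvb : β * v ≤ 1)
    (heq : u * Real.exp (-β * u) = v * Real.exp (-β * v)) : u = v := by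
  rcases hβ.lt_or_eq with hβpos | hβ0
  · have hmono : StrictMonoOn (fun u => u * Real.exp (-β * u)) (Icc 0 (1 / β)) := by
      apply strictMonoOn_of_deriv_pos (convex_Icc _ _)
      · exact (continuous_id.mul
          (Real.continuous_exp.comp (continuous_const.mul continuous_id))).continuousOn
      · intro w hw
        rw [interior_Icc] at hw
        have hd : HasDerivAt (fun u => u * Real.exp (-β * u))
            (1 * Real.exp (-β * w) + w * (Real.exp (-β * w) * (-β * 1))) w := by
          have hin : HasDerivAt (fun u : ℝ => -β * u) (-β * 1) w :=
            (hasDerivAt_id w).const_mul (-β)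
          exact (hasDerivAt_id w).mul hin.exp
        rw [hd.deriv]
        have hwβ : β * w < 1 := by
          have hw2 := hw.2
          rw [lt_div_iff₀ hβpos] at hw2
          linarith
        have hepos := Real.exp_pos (-β * w)
        nlinarith [hw.1]
    have hmemu : u ∈ Icc 0 (1 / β) := ⟨hu, by rw [le_div_iff₀ hβpos]; linarith⟩
    have hmemv : v ∈ Icc 0 (1 / β) := ⟨hv, by rw [le_div_iff₀ hβpos]; linarith⟩
    exact hmono.injOn hmemu hmemv heq
  · rw [← hβ0] at heq
    simpa using heq

end PottsAux

/-- Equality of the stationarity values `Θ` forces equality of the ordered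
global minimizers (Lemma 5.10). -/
theorem potts_Theta_determines_minimizer (q : ℕ) [NeZero q] (hq : 4 ≤ q)
    (β h : ℝ) (hβ : 0 ≤ β) (hh : h < 0) (x x' : Fin q → ℝ)
    (hx : IsPottsMinimizer q β h x) (hxf : NegOrderedForm q x)
    (hx' : IsPottsMinimizer q β h x') (hx'f : NegOrderedForm q x') :
    -- the stationarity relations hold for `x` and `x'` …
    (∀ k : Fin q, k ≠ 0 →
      x 0 * Real.exp (-β * x 0 - h) = x k * Real.exp (-β * x k)) ∧
    (∀ k : Fin q, k ≠ 0 →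
      x' 0 * Real.exp (-β * x' 0 - h) = x' k * Real.exp (-β * x' k)) ∧
    -- … and if the common values `Θ`, `Θ'` agree, the minimizers coincide
    (x 0 * Real.exp (-β * x 0 - h) = x' 0 * Real.exp (-β * x' 0 - h) → x = x') := by
  have hlast0 : lastIdx q ≠ 0 := PottsAux.lastIdx_ne_zero hq
  set j₁ : Fin q := ⟨1, by omega⟩ with hj₁def
  set j₂ : Fin q := ⟨2, by omega⟩ with hj₂def
  have hj₁mid : IsMid q j₁ := by
    constructor
    · intro he; have := congrArg Fin.val he; simp [hj₁def] at this
    · intro he; have := congrArg Fin.val he; simp [hj₁def, lastIdx] at this; omega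
  have hj₂mid : IsMid q j₂ := by
    constructor
    · intro he; have := congrArg Fin.val he; simp [hj₂def] at this
    · intro he; have := congrArg Fin.val he; simp [hj₂def, lastIdx] at this; omega
  have hj₁j₂ : j₁ ≠ j₂ := by
    intro he; have := congrArg Fin.val he; simp [hj₁def, hj₂def] at this
  have hx0pos : 0 < x 0 :=
    PottsAux.x0_pos hq hβ hh hx ⟨j₁, hj₁mid, hxf.2.1 j₁ hj₁mid, hxf.2.2 j₁ hj₁mid⟩
  have hx'0pos : 0 < x' 0 :=
    PottsAux.x0_pos hq hβ hh hx' ⟨j₁, hj₁mid, hx'f.2.1 j₁ hj₁mid, hx'f.2.2 j₁ hj₁mid⟩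
  have hxpos : ∀ k : Fin q, k ≠ 0 → 0 < x k := by
    intro k hk
    rcases eq_or_ne k (lastIdx q) with rfl | hkl
    · exact lt_of_lt_of_le (lt_trans hx0pos (hxf.2.1 j₁ hj₁mid)) (hxf.2.2 j₁ hj₁mid)
    · exact lt_trans hx0pos (hxf.2.1 k ⟨hk, hkl⟩)
  have hx'pos : ∀ k : Fin q, k ≠ 0 → 0 < x' k := by
    intro k hk
    rcases eq_or_ne k (lastIdx q) with rfl | hkl
    · exact lt_of_lt_of_le (lt_trans hx'0pos (hx'f.2.1 j₁ hj₁mid)) (hx'f.2.2 j₁ hj₁mid)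
    · exact lt_trans hx'0pos (hx'f.2.1 k ⟨hk, hkl⟩)
  have hstat : ∀ k : Fin q, k ≠ 0 →
      x 0 * Real.exp (-β * x 0 - h) = x k * Real.exp (-β * x k) :=
    fun k hk => PottsAux.stationarity hx hk hx0pos (hxpos k hk)
  have hstat' : ∀ k : Fin q, k ≠ 0 →
      x' 0 * Real.exp (-β * x' 0 - h) = x' k * Real.exp (-β * x' k) :=
    fun k hk => PottsAux.stationarity hx' hk hx'0pos (hx'pos k hk)
  refine ⟨hstat, hstat', ?_⟩
  intro hΘ
  -- second-order bounds
  have hbx : β * x j₁ ≤ 1 :=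
    PottsAux.mid_small hβ hx hj₁j₂ hj₁mid.1 hj₂mid.1
      (hxf.1 j₁ j₂ hj₁mid hj₂mid) (hxpos j₁ hj₁mid.1)
  have hbx' : β * x' j₁ ≤ 1 :=
    PottsAux.mid_small hβ hx' hj₁j₂ hj₁mid.1 hj₂mid.1
      (hx'f.1 j₁ j₂ hj₁mid hj₂mid) (hx'pos j₁ hj₁mid.1)
  have hax : β * x 0 ≤ 1 :=
    le_trans (mul_le_mul_of_nonneg_left (hxf.2.1 j₁ hj₁mid).le hβ) hbx
  have hax' : β * x' 0 ≤ 1 :=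
    le_trans (mul_le_mul_of_nonneg_left (hx'f.2.1 j₁ hj₁mid).le hβ) hbx'
  -- a = a'
  have e1 : ∀ u : ℝ, u * Real.exp (-β * u) = u * Real.exp (-β * u - h) * Real.exp h := by
    intro u
    rw [mul_assoc, ← Real.exp_add]
    congr 2
    ring
  have hfa : x 0 * Real.exp (-β * x 0) = x' 0 * Real.exp (-β * x' 0) := by
    rw [e1 (x 0), e1 (x' 0), hΘ]
  have ha_eq : x 0 = x' 0 :=
    PottsAux.f_inj hβ hx0pos.le hx'0pos.le hax hax' hfa
  -- b = b'
  have hfb : x j₁ * Real.exp (-β * x j₁) = x' j₁ * Real.exp (-β * x' j₁) := by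
    rw [← hstat j₁ hj₁mid.1, ← hstat' j₁ hj₁mid.1]
    exact hΘ
  have hb_eq : x j₁ = x' j₁ :=
    PottsAux.f_inj hβ (hxpos j₁ hj₁mid.1).le (hx'pos j₁ hj₁mid.1).le hbx hbx' hfb
  -- c = c' via the sum constraint
  have hdecomp : ∀ y : Fin q → ℝ, (∑ k, y k)
      = y 0 + (y (lastIdx q) + ∑ i ∈ (Finset.univ.erase 0).erase (lastIdx q), y i) := by
    intro y
    rw [← Finset.add_sum_erase _ y (Finset.mem_univ 0)]
    congr 1
    rw [← Finset.add_sum_erase _ y (Finset.mem_erase.mpr ⟨hlast0, Finset.mem_univ _⟩)]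
  have hmidsum : ∑ i ∈ (Finset.univ.erase 0).erase (lastIdx q), x i
      = ∑ i ∈ (Finset.univ.erase 0).erase (lastIdx q), x' i := by
    apply Finset.sum_congr rfl
    intro i hi
    rw [Finset.mem_erase, Finset.mem_erase] at hi
    have hmid : IsMid q i := ⟨hi.2.1, hi.1⟩
    rw [hxf.1 i j₁ hmid hj₁mid, hx'f.1 i j₁ hmid hj₁mid, hb_eq]
  have hsum1 := hx.1.2
  have hsum2 := hx'.1.2
  rw [hdecomp] at hsum1
  rw [hdecomp] at hsum2
  have hc_eq : x (lastIdx q) = x' (lastIdx q) := by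
    rw [ha_eq, hmidsum] at hsum1
    linarith
  funext k
  rcases eq_or_ne k 0 with rfl | hk0
  · exact ha_eq
  rcases eq_or_ne k (lastIdx q) with rfl | hkl
  · exact hc_eq
  · have hmid : IsMid q k := ⟨hk0, hkl⟩
    rw [hxf.1 k j₁ hmid hj₁mid, hx'f.1 k j₁ hmid hj₁mid, hb_eq]
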